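/- arXiv:1005.4724 — 5 statements merged into one kernel-verified Lean document; each statement's English description precedes it below -/
import Mathlib

section
/- Let R and S be finite sets of positive integers satisfying the tableau condition, and let f be the greedy matching of S into R. Then the arcs produced by f are pairwise noncrossing: for all i, i′ ∈ S with i < i′, it is not the case that f(i) < f(i′) < i < i′. -/
open scoped Classical

/-- The `j`-th smallest element (0-indexed) of a finite set of naturals (default `0`). -/
noncomputable def nthSmallest (s : Finset ℕ) (j : ℕ) : ℕ := (s.sort (· ≤ ·)).getD j 0

/-- `(R, S)` satisfies the tableau condition: `|S| ≤ |R|` and for every `j ≤ |S|`, the `j`-th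
smallest element of `S` is greater than the `j`-th smallest element of `R`. -/
def TableauCond (R S : Finset ℕ) : Prop :=
  S.card ≤ R.card ∧ ∀ j < S.card, nthSmallest R j < nthSmallest S j

/-- The greedy matching of `S` into `R`: processing the elements `i` of `S` in increasing
order, `greedy R S i = max { j ∈ R : j < i and j ≠ greedy R S i' for every i' ∈ S with i' < i }`
(with value `0` when this set is empty or `i ∉ S`). -/
noncomputable def greedy (R S : Finset ℕ) (i : ℕ) : ℕ :=
  Nat.strongRecOn i fun i ih =>
    WithBot.unbotD 0 ((R.filter fun j => j < i ∧ ∀ i' (_ : i' ∈ S) (h : i' < i), j ≠ ih i' h).max)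

lemma greedy_eq (R S : Finset ℕ) (i : ℕ) :
    greedy R S i =
      WithBot.unbotD 0 ((R.filter fun j => j < i ∧ ∀ i' (_ : i' ∈ S), i' < i → j ≠ greedy R S i').max) := by
  rw [greedy, Nat.strongRecOn]
  rw [WellFounded.fix_eq]
  rfl

lemma greedy_mem (R S : Finset ℕ) (i : ℕ) (hne : greedy R S i ≠ 0) :
    greedy R S i ∈
      R.filter fun j => j < i ∧ ∀ i' (_ : i' ∈ S), i' < i → j ≠ greedy R S i' := by
  rcases hm : (R.filter fun j => j < i ∧ ∀ i' (_ : i' ∈ S), i' < i → j ≠ greedy R S i').max with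
    _ | m
  · exfalso; rw [greedy_eq, hm] at hne; exact hne rfl
  · have hg : greedy R S i = m := by rw [greedy_eq, hm]; rfl
    rw [hg]; exact Finset.mem_of_max hm

/-- The arcs produced by the greedy matching are pairwise noncrossing: for `i, i' ∈ S`
with `i < i'`, it is not the case that `f(i) < f(i') < i < i'`. -/
theorem greedy_matching_noncrossing (R S : Finset ℕ)
    (hRpos : ∀ x ∈ R, 0 < x) (hSpos : ∀ x ∈ S, 0 < x)
    (h : TableauCond R S) :
    ∀ i ∈ S, ∀ i' ∈ S, i < i' →
      ¬ (greedy R S i < greedy R S i' ∧ greedy R S i' < i) := by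
  rintro i hi i' hi' hlt ⟨h1, h2⟩
  have hne : greedy R S i' ≠ 0 := by omega
  have hmem := greedy_mem R S i' hne
  rw [Finset.mem_filter] at hmem
  obtain ⟨hR, -, hdiff⟩ := hmem
  -- greedy R S i' is a candidate at time i
  have hcand : greedy R S i' ∈
      R.filter fun j => j < i ∧ ∀ i'' (_ : i'' ∈ S), i'' < i → j ≠ greedy R S i'' := by
    rw [Finset.mem_filter]
    exact ⟨hR, h2, fun i'' hi'' hlt'' => hdiff i'' hi'' (hlt''.trans hlt)⟩
  have hle := Finset.le_max hcand
  rcases hm : (R.filter fun j => j < i ∧ ∀ i'' (_ : i'' ∈ S), i'' < i →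
      j ≠ greedy R S i'').max with _ | m
  · rw [hm] at hle; exact absurd hle (WithBot.not_coe_le_bot _)
  · rw [hm] at hle
    have : greedy R S i' ≤ m := WithBot.coe_le_coe.mp hle
    have : greedy R S i = m := by rw [greedy_eq, hm]; rfl
    omega
end

section
/- In the m-diagram of a three-row standard Young tableau, if two distinct arcs cross, then one of them is a first arc and the other is a second arc. In particular, two first arcs never cross and two second arcs never cross. -/
open scoped Classical

/-- The arcs produced by the greedy matching of `S` into `R`, as ordered pairs
`(left endpoint, right endpoint)`. -/
noncomputable def arcsOf (R S : Finset ℕ) : Finset (ℕ × ℕ) :=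
  S.image fun i => (greedy R S i, i)

/-- `(B, M, T)` (bottom, middle, top rows) encodes a three-row standard Young tableau with
`N` boxes: the rows partition `{1,…,N}`, row lengths weakly decrease from bottom to top, and
consecutive rows satisfy the tableau condition. -/
def ThreeRowSYT (N : ℕ) (B M T : Finset ℕ) : Prop :=
  Disjoint B M ∧ Disjoint B T ∧ Disjoint M T ∧
  B ∪ M ∪ T = Finset.Icc 1 N ∧
  T.card ≤ M.card ∧ M.card ≤ B.card ∧
  TableauCond B M ∧ TableauCond M T

/-- Two arcs `(p,q)` and `(p',q')` (with `p<q`, `p'<q'`) cross if `p<p'<q<q'` or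
`p'<p<q'<q`. -/
def Cross (a b : ℕ × ℕ) : Prop :=
  (a.1 < b.1 ∧ b.1 < a.2 ∧ a.2 < b.2) ∨ (b.1 < a.1 ∧ a.1 < b.2 ∧ b.2 < a.2)


lemma greedy_def (R S : Finset ℕ) (i : ℕ) :
    greedy R S i =
      WithBot.unbotD 0 ((R.filter fun j => j < i ∧ ∀ i' (_ : i' ∈ S) (_ : i' < i), j ≠ greedy R S i').max) := by
  conv_lhs => rw [greedy, Nat.strongRecOn_eq]
  rfl

/-- If `i < i'` and `greedy R S i' < i` then `greedy R S i' ≤ greedy R S i`: no crossing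
within a single greedy matching. -/
lemma greedy_no_cross (R S : Finset ℕ) {i i' : ℕ} (hi : i < i')
    (hlt : greedy R S i' < i) : greedy R S i' ≤ greedy R S i := by
  set p' := greedy R S i' with hp'
  rcases Nat.eq_zero_or_pos p' with h0 | hpos
  · omega
  have hdef' := greedy_def R S i'
  rw [← hp'] at hdef'
  set F' := R.filter fun j => j < i' ∧ ∀ i'' (_ : i'' ∈ S) (_ : i'' < i'), j ≠ greedy R S i'' with hF'
  have hmax' : F'.max = (p' : WithBot ℕ) := by
    cases hFm : F'.max with
    | bot => rw [hFm] at hdef'; simp at hdef'; omega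
    | coe m => rw [hFm] at hdef'; simp at hdef'; rw [hdef']; rfl
  have hp'mem : p' ∈ F' := Finset.mem_of_max hmax'
  rw [hF', Finset.mem_filter] at hp'mem
  obtain ⟨hp'R, -, hp'ne⟩ := hp'mem
  have hcand : p' ∈ R.filter fun j => j < i ∧ ∀ i'' (_ : i'' ∈ S) (_ : i'' < i), j ≠ greedy R S i'' := by
    rw [Finset.mem_filter]
    exact ⟨hp'R, hlt, fun i'' h1 h2 => hp'ne i'' h1 (h2.trans hi)⟩
  have hle := Finset.le_max hcand
  have hdef := greedy_def R S i
  cases hFm : (R.filter fun j => j < i ∧ ∀ i'' (_ : i'' ∈ S) (_ : i'' < i), j ≠ greedy R S i'').max with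
  | bot => rw [hFm] at hle; simp at hle
  | coe m =>
    rw [hFm] at hle hdef
    simp at hle hdef
    omega

/-- Two arcs of a single greedy matching never cross. -/
lemma arcsOf_no_cross (R S : Finset ℕ) {a a' : ℕ × ℕ}
    (ha : a ∈ arcsOf R S) (ha' : a' ∈ arcsOf R S) (hc : Cross a a') : False := by
  rw [arcsOf, Finset.mem_image] at ha ha'
  obtain ⟨i, hi, rfl⟩ := ha
  obtain ⟨i', hi', rfl⟩ := ha'
  rcases hc with ⟨h1, h2, h3⟩ | ⟨h1, h2, h3⟩
  · simp only at h1 h2 h3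
    have := greedy_no_cross R S h3 h2
    omega
  · simp only at h1 h2 h3
    have := greedy_no_cross R S h3 h2
    omega

/-- In the m-diagram of a three-row standard Young tableau, if two distinct arcs cross,
then one of them is a first arc (an arc of `arcsOf B M`) and the other is a second arc
(an arc of `arcsOf M T`). -/
theorem crossing_arcs_are_first_and_second (N : ℕ) (B M T : Finset ℕ)
    (h : ThreeRowSYT N B M T) (a a' : ℕ × ℕ)
    (ha : a ∈ arcsOf B M ∪ arcsOf M T) (ha' : a' ∈ arcsOf B M ∪ arcsOf M T)
    (hne : a ≠ a') (hcross : Cross a a') :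
    (a ∈ arcsOf B M ∧ a' ∈ arcsOf M T) ∨ (a ∈ arcsOf M T ∧ a' ∈ arcsOf B M) := by
  rw [Finset.mem_union] at ha ha'
  rcases ha with h1 | h1 <;> rcases ha' with h2 | h2
  · exact absurd hcross (arcsOf_no_cross B M h1 h2 ·)
  · exact Or.inl ⟨h1, h2⟩
  · exact Or.inr ⟨h1, h2⟩
  · exact absurd hcross (arcsOf_no_cross M T h1 h2 ·)
end

section
/- In the m-diagram of a three-row standard Young tableau, any two distinct ms cross at most once: if (i,j,k) and (i′,j′,k′) are distinct ms, then at most one of the four pairs of arcs {(i,j),(j,k)} × {(i′,j′),(j′,k′)} is a crossing pair. -/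
open scoped Classical

/-- `(i,j,k)` is an m of the m-diagram of the three-row tableau `(B,M,T)`. -/
def IsM (B M T : Finset ℕ) (i j k : ℕ) : Prop :=
  j ∈ M ∧ i = greedy B M j ∧ k ∈ T ∧ greedy M T k = j

lemma greedy_spec (R S : Finset ℕ) (i : ℕ) (h : greedy R S i ≠ 0) :
    greedy R S i ∈ R ∧ greedy R S i < i ∧
      ∀ i' ∈ S, i' < i → greedy R S i ≠ greedy R S i' := by
  rcases hF : (R.filter fun j => j < i ∧ ∀ i' (_ : i' ∈ S) (_ : i' < i),
      j ≠ greedy R S i').max with _ | m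
  · exfalso; apply h; rw [greedy_def, hF]; rfl
  · have hg : greedy R S i = m := by rw [greedy_def, hF]; rfl
    have hm := Finset.mem_of_max hF
    rw [Finset.mem_filter] at hm
    rw [hg]
    exact ⟨hm.1, hm.2.1, hm.2.2⟩

lemma greedy_nocross (R S : Finset ℕ) (h0 : (0:ℕ) ∉ R) {a b : ℕ}
    (ha : a ∈ S) (hb : b ∈ S) :
    ¬ Cross (greedy R S a, a) (greedy R S b, b) := by
  have key : ∀ x y : ℕ, x ∈ S → y ∈ S → x < y → greedy R S y < x →
      greedy R S y ≤ greedy R S x := by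
    intro x y hx hy hxy hlt
    by_cases hq : greedy R S y = 0
    · omega
    obtain ⟨hqR, hqy, hqne⟩ := greedy_spec R S y hq
    have hqF : greedy R S y ∈ R.filter fun j => j < x ∧
        ∀ i' (_ : i' ∈ S) (_ : i' < x), j ≠ greedy R S i' := by
      rw [Finset.mem_filter]
      exact ⟨hqR, hlt, fun i' hi' hi'x => hqne i' hi' (hi'x.trans hxy)⟩
    obtain ⟨m, hm⟩ := Finset.max_of_mem hqF
    have hle : (greedy R S y : WithBot ℕ) ≤ m := by
      have := Finset.le_max hqF; rwa [hm] at this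
    have : greedy R S x = m := by rw [greedy_def, hm]; rfl
    rw [this]
    exact_mod_cast hle
  rintro (⟨h1, h2, h3⟩ | ⟨h1, h2, h3⟩) <;> dsimp at h1 h2 h3
  · have := key a b ha hb h3 h2; omega
  · have := key b a hb ha h3 h2; omega

/-- Any two distinct ms of the m-diagram of a three-row standard Young tableau cross at
most once: at most one of the four pairs of arcs `{(i,j),(j,k)} × {(i',j'),(j',k')}`
is a crossing pair. -/
theorem two_ms_cross_at_most_once (N : ℕ) (B M T : Finset ℕ)
    (h : ThreeRowSYT N B M T) (i j k i' j' k' : ℕ)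
    (hm : IsM B M T i j k) (hm' : IsM B M T i' j' k')
    (hne : (i, j, k) ≠ (i', j', k')) :
    ¬ (Cross (i, j) (i', j') ∧ Cross (i, j) (j', k')) ∧
    ¬ (Cross (i, j) (i', j') ∧ Cross (j, k) (i', j')) ∧
    ¬ (Cross (i, j) (i', j') ∧ Cross (j, k) (j', k')) ∧
    ¬ (Cross (i, j) (j', k') ∧ Cross (j, k) (i', j')) ∧
    ¬ (Cross (i, j) (j', k') ∧ Cross (j, k) (j', k')) ∧
    ¬ (Cross (j, k) (i', j') ∧ Cross (j, k) (j', k')) := by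
  obtain ⟨h1, h2, h3, h4, _⟩ := h
  obtain ⟨hjM, hi, hkT, hjk⟩ := hm
  obtain ⟨hjM', hi', hkT', hjk'⟩ := hm'
  have hB0 : (0:ℕ) ∉ B := fun hx => by
    have : (0:ℕ) ∈ Finset.Icc 1 N := h4 ▸ (by simp [Finset.mem_union, hx])
    simp at this
  have hM0 : (0:ℕ) ∉ M := fun hx => by
    have : (0:ℕ) ∈ Finset.Icc 1 N := h4 ▸ (by simp [Finset.mem_union, hx])
    simp at this
  have hlow : ¬ Cross (i, j) (i', j') := by
    rw [hi, hi']; exact greedy_nocross B M hB0 hjM hjM'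
  have hup : ¬ Cross (j, k) (j', k') := by
    rw [← hjk, ← hjk']; exact greedy_nocross M T hM0 hkT hkT'
  refine ⟨fun ⟨hc, _⟩ => hlow hc, fun ⟨hc, _⟩ => hlow hc, fun ⟨hc, _⟩ => hlow hc,
    ?_, fun ⟨_, hc⟩ => hup hc, fun ⟨_, hc⟩ => hup hc⟩
  rintro ⟨hc1, hc2⟩
  simp only [Cross] at hc1 hc2
  omega
end

section
/- Let (B, M, T) be a standard Young tableau of shape 3 × n (so |B| = |M| = |T| = n and B ∪ M ∪ T = {1,…,3n}), let A be the arc set of its m-diagram, and let δ be the circle-depth difference function. Then for every i ∈ {1,…,3n}: i ∈ B if and only if δ(i) = 1; i ∈ M if and only if δ(i) = 0; and i ∈ T if and only if δ(i) = −1. Consequently the depth map recovers the tableau from its m-diagram. -/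
open scoped Classical

/-- `d(i+ε)`: the number of arcs `(a,b) ∈ A` with `a ≤ i < b`. -/
noncomputable def dPlus (A : Finset (ℕ × ℕ)) (i : ℕ) : ℕ :=
  (A.filter fun a => a.1 ≤ i ∧ i < a.2).card

/-- `d(i−ε)`: the number of arcs `(a,b) ∈ A` with `a < i ≤ b`. -/
noncomputable def dMinus (A : Finset (ℕ × ℕ)) (i : ℕ) : ℕ :=
  (A.filter fun a => a.1 < i ∧ i ≤ a.2).card

/-- The circle-depth difference function `δ(i) = d(i+ε) − d(i−ε)`. -/
noncomputable def deltaDepth (A : Finset (ℕ × ℕ)) (i : ℕ) : ℤ :=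
  (dPlus A i : ℤ) - (dMinus A i : ℤ)


section Helpers

lemma nthSmallest_eq (s : Finset ℕ) {j : ℕ} (hj : j < s.card) :
    nthSmallest s j = s.orderEmbOfFin rfl ⟨j, hj⟩ := by
  rw [nthSmallest, Finset.orderEmbOfFin_apply,
    List.getD_eq_getElem _ _ (by rw [Finset.length_sort]; exact hj)]
  rfl

lemma card_filter_lt_orderEmb (s : Finset ℕ) (m : Fin s.card) :
    (s.filter (· < s.orderEmbOfFin rfl m)).card = m := by
  have h : s.filter (· < s.orderEmbOfFin rfl m)
      = (Finset.Iio m).image (s.orderEmbOfFin rfl) := by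
    ext x
    simp only [Finset.mem_filter, Finset.mem_image, Finset.mem_Iio]
    constructor
    · rintro ⟨hx, hlt⟩
      obtain ⟨j, hj⟩ : ∃ j, s.orderEmbOfFin rfl j = x := by
        have := Finset.range_orderEmbOfFin s (k := s.card) rfl
        have : x ∈ Set.range (s.orderEmbOfFin rfl) := this ▸ hx
        exact this
      exact ⟨j, by rw [← hj] at hlt; exact (s.orderEmbOfFin rfl).lt_iff_lt.mp hlt, hj⟩
    · rintro ⟨j, hj, rfl⟩
      exact ⟨Finset.orderEmbOfFin_mem s rfl j, (s.orderEmbOfFin rfl).lt_iff_lt.mpr hj⟩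
  rw [h, Finset.card_image_of_injective _ (s.orderEmbOfFin rfl).injective]
  simp

lemma card_filter_lt_lt {R S : Finset ℕ} (hTC : TableauCond R S) {i : ℕ} (hi : i ∈ S) :
    (S.filter (· < i)).card < (R.filter (· < i)).card := by
  obtain ⟨m, rfl⟩ : ∃ m, S.orderEmbOfFin rfl m = i := by
    have h := Finset.range_orderEmbOfFin S (k := S.card) rfl
    have : i ∈ Set.range (S.orderEmbOfFin rfl) := h ▸ hi
    exact this
  rw [card_filter_lt_orderEmb]
  have hmR : (m : ℕ) < R.card := lt_of_lt_of_le m.2 hTC.1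
  have hkey : ∀ j : Fin R.card, (j : ℕ) ≤ (m : ℕ) →
      R.orderEmbOfFin rfl j < S.orderEmbOfFin rfl m := by
    intro j hj
    have h1 : R.orderEmbOfFin rfl j ≤ R.orderEmbOfFin rfl ⟨m, hmR⟩ :=
      (R.orderEmbOfFin rfl).monotone (by exact hj)
    have h2 : nthSmallest R m < nthSmallest S m := hTC.2 m m.2
    rw [nthSmallest_eq R hmR, nthSmallest_eq S m.2] at h2
    exact lt_of_le_of_lt h1 h2
  have hsub : (Finset.Iic (⟨m, hmR⟩ : Fin R.card)).image (R.orderEmbOfFin rfl)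
      ⊆ R.filter (· < S.orderEmbOfFin rfl m) := by
    intro x hx
    simp only [Finset.mem_image, Finset.mem_Iic] at hx
    obtain ⟨j, hj, rfl⟩ := hx
    exact Finset.mem_filter.mpr ⟨Finset.orderEmbOfFin_mem R rfl j, hkey j hj⟩
  calc (m : ℕ) < (m : ℕ) + 1 := Nat.lt_succ_self _
    _ = ((Finset.Iic (⟨m, hmR⟩ : Fin R.card)).image (R.orderEmbOfFin rfl)).card := by
        rw [Finset.card_image_of_injective _ (R.orderEmbOfFin rfl).injective]
        simp
    _ ≤ _ := Finset.card_le_card hsub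

noncomputable def gset (R S : Finset ℕ) (i : ℕ) : Finset ℕ :=
  R.filter fun j => j < i ∧ ∀ i' ∈ S, i' < i → j ≠ greedy R S i'

theorem greedy_eq' (R S : Finset ℕ) (i : ℕ) :
    greedy R S i = WithBot.unbotD 0 (gset R S i).max := by
  have h : ∀ m, greedy R S m = Nat.lt_wfRel.wf.fix (fun i ih =>
      WithBot.unbotD 0 ((R.filter fun j => j < i ∧ ∀ i' (_ : i' ∈ S) (h : i' < i), j ≠ ih i' h).max))
      m := fun m => rfl
  rw [h, WellFounded.fix_eq]
  simp only [← h]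
  rfl

lemma gset_nonempty {R S : Finset ℕ} (hTC : TableauCond R S) {i : ℕ} (hi : i ∈ S) :
    (gset R S i).Nonempty := by
  have hsub : R.filter (· < i) \ (S.filter (· < i)).image (greedy R S) ⊆ gset R S i := by
    intro j hj
    rw [Finset.mem_sdiff, Finset.mem_filter] at hj
    refine Finset.mem_filter.mpr ⟨hj.1.1, hj.1.2, fun i' hi' hlt heq => hj.2 ?_⟩
    exact Finset.mem_image.mpr ⟨i', Finset.mem_filter.mpr ⟨hi', hlt⟩, heq.symm⟩
  rw [← Finset.card_pos]
  refine lt_of_lt_of_le ?_ (Finset.card_le_card hsub)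
  have h1 := card_filter_lt_lt hTC hi
  have h2 : ((S.filter (· < i)).image (greedy R S)).card ≤ (S.filter (· < i)).card :=
    Finset.card_image_le
  have h3 := Finset.le_card_sdiff ((S.filter (· < i)).image (greedy R S)) (R.filter (· < i))
  omega

lemma greedy_mem_gset {R S : Finset ℕ} (hTC : TableauCond R S) {i : ℕ} (hi : i ∈ S) :
    greedy R S i ∈ gset R S i := by
  obtain ⟨a, ha⟩ := Finset.max_of_nonempty (gset_nonempty hTC hi)
  rw [greedy_eq', ha]
  exact Finset.mem_of_max ha

lemma greedy_mem_s7 {R S : Finset ℕ} (hTC : TableauCond R S) {i : ℕ} (hi : i ∈ S) :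
    greedy R S i ∈ R := (Finset.mem_filter.mp (greedy_mem_gset hTC hi)).1

lemma greedy_lt {R S : Finset ℕ} (hTC : TableauCond R S) {i : ℕ} (hi : i ∈ S) :
    greedy R S i < i := (Finset.mem_filter.mp (greedy_mem_gset hTC hi)).2.1

lemma greedy_injOn {R S : Finset ℕ} (hTC : TableauCond R S) :
    Set.InjOn (greedy R S) S := by
  intro a ha b hb hab
  by_contra hne
  rcases lt_or_gt_of_ne hne with hlt | hlt
  · exact (Finset.mem_filter.mp (greedy_mem_gset hTC hb)).2.2 a ha hlt hab.symm
  · exact (Finset.mem_filter.mp (greedy_mem_gset hTC ha)).2.2 b hb hlt hab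

lemma greedy_image {R S : Finset ℕ} (hTC : TableauCond R S) (hcard : R.card = S.card) :
    S.image (greedy R S) = R := by
  apply Finset.eq_of_subset_of_card_le
  · intro x hx
    obtain ⟨b, hb, rfl⟩ := Finset.mem_image.mp hx
    exact greedy_mem_s7 hTC hb
  · rw [Finset.card_image_of_injOn (greedy_injOn hTC), hcard]

lemma arcs_fst_lt_snd {R S : Finset ℕ} (hTC : TableauCond R S) :
    ∀ a ∈ arcsOf R S, a.1 < a.2 := by
  intro a ha
  obtain ⟨b, hb, rfl⟩ := Finset.mem_image.mp ha
  exact greedy_lt hTC hb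

lemma arcs_filter_snd (R S : Finset ℕ) (i : ℕ) :
    ((arcsOf R S).filter fun a => a.2 = i).card = if i ∈ S then 1 else 0 := by
  have hinj : Function.Injective (fun b : ℕ => (greedy R S b, b)) := by
    intro x y hxy; exact congrArg Prod.snd hxy
  rw [arcsOf, Finset.filter_image, Finset.card_image_of_injective _ hinj]
  rw [show (S.filter fun b => b = i) = S.filter (· = i) from rfl, Finset.filter_eq']
  split <;> simp

lemma arcs_filter_fst {R S : Finset ℕ} (hTC : TableauCond R S) (hcard : R.card = S.card)
    (i : ℕ) :
    ((arcsOf R S).filter fun a => a.1 = i).card = if i ∈ R then 1 else 0 := by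
  have hinj : Function.Injective (fun b : ℕ => (greedy R S b, b)) := by
    intro x y hxy; exact congrArg Prod.snd hxy
  rw [arcsOf, Finset.filter_image, Finset.card_image_of_injective _ hinj]
  have h1 : ((S.filter fun b => greedy R S b = i).image (greedy R S)).card
      = (S.filter fun b => greedy R S b = i).card :=
    Finset.card_image_of_injOn ((greedy_injOn hTC).mono (by
      intro x hx; exact (Finset.mem_filter.mp hx).1))
  have h2 : (S.filter fun b => greedy R S b = i).image (greedy R S)
      = R.filter (· = i) := by
    ext x
    simp only [Finset.mem_image, Finset.mem_filter]
    constructor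
    · rintro ⟨b, ⟨hbS, hgi⟩, rfl⟩
      exact ⟨greedy_mem_s7 hTC hbS, hgi⟩
    · rintro ⟨hxR, rfl⟩
      have : x ∈ S.image (greedy R S) := (greedy_image hTC hcard).symm ▸ hxR
      obtain ⟨b, hbS, hgb⟩ := Finset.mem_image.mp this
      exact ⟨b, ⟨hbS, hgb⟩, hgb⟩
  rw [← h1, h2, Finset.filter_eq']
  split <;> simp

lemma deltaDepth_eq_counts (A : Finset (ℕ × ℕ)) (hA : ∀ a ∈ A, a.1 < a.2) (i : ℕ) :
    deltaDepth A i =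
      ((A.filter fun a => a.1 = i).card : ℤ) - ((A.filter fun a => a.2 = i).card : ℤ) := by
  have hP : dPlus A i
      = (A.filter fun a => a.1 < i ∧ i < a.2).card + (A.filter fun a => a.1 = i).card := by
    rw [dPlus]
    have h : A.filter (fun a => a.1 ≤ i ∧ i < a.2)
        = A.filter (fun a => a.1 < i ∧ i < a.2) ∪ A.filter (fun a => a.1 = i) := by
      rw [← Finset.filter_or]
      apply Finset.filter_congr
      intro a ha
      have := hA a ha
      omega
    rw [h, Finset.card_union_of_disjoint]
    refine Finset.disjoint_left.mpr ?_
    intro a ha hb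
    simp only [Finset.mem_filter] at ha hb
    omega
  have hMi : dMinus A i
      = (A.filter fun a => a.1 < i ∧ i < a.2).card + (A.filter fun a => a.2 = i).card := by
    rw [dMinus]
    have h : A.filter (fun a => a.1 < i ∧ i ≤ a.2)
        = A.filter (fun a => a.1 < i ∧ i < a.2) ∪ A.filter (fun a => a.2 = i) := by
      rw [← Finset.filter_or]
      apply Finset.filter_congr
      intro a ha
      have := hA a ha
      omega
    rw [h, Finset.card_union_of_disjoint]
    refine Finset.disjoint_left.mpr ?_
    intro a ha hb
    simp only [Finset.mem_filter] at ha hb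
    omega
  rw [deltaDepth, hP, hMi]
  push_cast
  ring

end Helpers

/-- For a standard Young tableau of shape `3 × n`, the circle-depth difference function of
the arc set of its m-diagram detects the rows: `δ(i) = 1` exactly on the bottom row,
`δ(i) = 0` exactly on the middle row, and `δ(i) = −1` exactly on the top row. Hence the
depth map recovers the tableau from its m-diagram. -/
theorem depth_map_recovers_tableau (n : ℕ) (B M T : Finset ℕ)
    (h : ThreeRowSYT (3 * n) B M T)
    (hB : B.card = n) (hM : M.card = n) (hT : T.card = n) :
    ∀ i ∈ Finset.Icc 1 (3 * n),
      (i ∈ B ↔ deltaDepth (arcsOf B M ∪ arcsOf M T) i = 1) ∧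
      (i ∈ M ↔ deltaDepth (arcsOf B M ∪ arcsOf M T) i = 0) ∧
      (i ∈ T ↔ deltaDepth (arcsOf B M ∪ arcsOf M T) i = -1) := by
  obtain ⟨hBM, hBT, hMT, hUnion, -, -, hTCBM, hTCMT⟩ := h
  intro i hi
  set A := arcsOf B M ∪ arcsOf M T with hAdef
  have hlt : ∀ a ∈ A, a.1 < a.2 := by
    intro a ha
    rcases Finset.mem_union.mp ha with h' | h'
    · exact arcs_fst_lt_snd hTCBM a h'
    · exact arcs_fst_lt_snd hTCMT a h'
  have hdisj : Disjoint (arcsOf B M) (arcsOf M T) := by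
    refine Finset.disjoint_left.mpr ?_
    intro a ha hb
    obtain ⟨b, hbM, rfl⟩ := Finset.mem_image.mp ha
    obtain ⟨t, htT, heq⟩ := Finset.mem_image.mp hb
    have hsnd : t = b := congrArg Prod.snd heq
    rw [hsnd] at htT
    exact Finset.disjoint_left.mp hMT hbM htT
  have hδ : deltaDepth A i = (if i ∈ B then (1 : ℤ) else 0) - (if i ∈ T then 1 else 0) := by
    rw [deltaDepth_eq_counts A hlt i, hAdef, Finset.filter_union, Finset.filter_union,
      Finset.card_union_of_disjoint
        (hdisj.mono (Finset.filter_subset _ _) (Finset.filter_subset _ _)),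
      Finset.card_union_of_disjoint
        (hdisj.mono (Finset.filter_subset _ _) (Finset.filter_subset _ _)),
      arcs_filter_fst hTCBM (by rw [hB, hM]) i, arcs_filter_fst hTCMT (by rw [hM, hT]) i,
      arcs_filter_snd B M i, arcs_filter_snd M T i]
    push_cast
    split_ifs <;> ring
  have hmem : i ∈ B ∪ M ∪ T := by rw [hUnion]; exact hi
  rw [Finset.mem_union, Finset.mem_union] at hmem
  rcases hmem with (hiB | hiM) | hiT
  · have hiM : i ∉ M := Finset.disjoint_left.mp hBM hiB
    have hiT : i ∉ T := Finset.disjoint_left.mp hBT hiB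
    rw [hδ, if_pos hiB, if_neg hiT]
    refine ⟨⟨fun _ => by ring, fun _ => hiB⟩, ?_, ?_⟩ <;>
      constructor <;> intro h' <;> first | exact absurd h' hiM | exact absurd h' hiT | omega
  · have hiB : i ∉ B := Finset.disjoint_right.mp hBM hiM
    have hiT : i ∉ T := Finset.disjoint_left.mp hMT hiM
    rw [hδ, if_neg hiB, if_neg hiT]
    refine ⟨?_, ⟨fun _ => by ring, fun _ => hiM⟩, ?_⟩ <;>
      constructor <;> intro h' <;> first | exact absurd h' hiB | exact absurd h' hiT | omega
  · have hiB : i ∉ B := Finset.disjoint_right.mp hBT hiT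
    have hiM : i ∉ M := Finset.disjoint_right.mp hMT hiT
    rw [hδ, if_neg hiB, if_pos hiT]
    refine ⟨?_, ?_, ⟨fun _ => by ring, fun _ => hiT⟩⟩ <;>
      constructor <;> intro h' <;> first | exact absurd h' hiB | exact absurd h' hiM | omega
end

section
/- If T and T′ are standard Young tableaux with N and N′ boxes respectively and i ≤ N, then the shuffle T′ ↦ᵢ T is a standard Young tableau with N + N′ boxes: its rows partition {1,…,N+N′}, the row lengths are weakly decreasing from bottom to top, and each consecutive pair of rows satisfies the tableau condition. -/
open scoped Classical

/-- A list of rows (bottom row first) encodes a standard Young tableau with `N` boxes: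
the rows are nonempty, pairwise disjoint, partition `{1,…,N}`, and each consecutive pair of
rows satisfies the tableau condition (which forces weakly decreasing row lengths). -/
def IsSYT (N : ℕ) (L : List (Finset ℕ)) : Prop :=
  (∀ s ∈ L, s.Nonempty) ∧
  L.Pairwise Disjoint ∧
  L.foldr (· ∪ ·) ∅ = Finset.Icc 1 N ∧
  (L.map Finset.card).Chain' (fun c c' => c' ≤ c) ∧
  L.Chain' TableauCond

/-- The arc set of the m-diagram of a tableau: the union over consecutive pairs of rows of
the arcs of the greedy matching of the upper row into the lower row. -/
noncomputable def arcsSYT (L : List (Finset ℕ)) : Finset (ℕ × ℕ) :=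
  (L.zip L.tail).foldr (fun p acc => arcsOf p.1 p.2 ∪ acc) ∅

/-- The shuffle of a tableau `L'` (with `N'` boxes) into a tableau `L` at position `i`:
row `s` of the shuffle is `{σ(x) : x ∈ L_s} ∪ {x + i : x ∈ L'_s}`, where `σ(x) = x` for
`x ≤ i` and `σ(x) = x + N'` for `x > i`. -/
noncomputable def shuffleRows (L L' : List (Finset ℕ)) (i N' : ℕ) : List (Finset ℕ) :=
  (List.range (max L.length L'.length)).map fun s =>
    ((L.getD s ∅).image fun x => if x ≤ i then x else x + N') ∪
    ((L'.getD s ∅).image fun x => x + i)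

lemma nth_eq {s : Finset ℕ} {j : ℕ} (h : j < s.card) :
    nthSmallest s j = (s.sort (· ≤ ·))[j]'(by rwa [Finset.length_sort]) :=
  List.getD_eq_getElem _ _ _

lemma nth_mem {s : Finset ℕ} {j : ℕ} (h : j < s.card) : nthSmallest s j ∈ s := by
  rw [nth_eq h]
  exact (Finset.mem_sort _).1 (List.getElem_mem _)

lemma nth_mono {s : Finset ℕ} {j k : ℕ} (hjk : j ≤ k) (h : k < s.card) :
    nthSmallest s j ≤ nthSmallest s k := by
  rw [nth_eq (lt_of_le_of_lt hjk h), nth_eq h]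
  rcases eq_or_lt_of_le hjk with rfl | hlt
  · exact le_refl _
  · exact le_of_lt <| List.pairwise_iff_getElem.1 (Finset.sortedLT_sort s).pairwise _ _ _ _ hlt

lemma mem_foldr {l : List (Finset ℕ)} {x : ℕ} :
    x ∈ l.foldr (· ∪ ·) ∅ ↔ ∃ t ∈ l, x ∈ t := by
  induction l with
  | nil => simp
  | cons a l ih => simp [ih]

lemma sort_union (A B : Finset ℕ) (h : ∀ a ∈ A, ∀ b ∈ B, a < b) :
    (A ∪ B).sort (· ≤ ·) = A.sort (· ≤ ·) ++ B.sort (· ≤ ·) := by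
  refine (fun hp h1 h2 => List.Perm.eq_of_pairwise' (r := (· ≤ ·)) h1 h2 hp) ?_ ?_ ?_
  · apply List.perm_of_nodup_nodup_toFinset_eq (Finset.sort_nodup _ _)
    · refine List.Nodup.append (Finset.sort_nodup _ _) (Finset.sort_nodup _ _) ?_
      intro a ha hb
      exact absurd rfl (ne_of_lt (h a (by simpa using ha) a (by simpa using hb)))
    · ext x; simp
  · exact Finset.pairwise_sort _ _
  · rw [List.pairwise_append]
    exact ⟨Finset.pairwise_sort _ _, Finset.pairwise_sort _ _,
      fun a ha b hb => le_of_lt (h a (by simpa using ha) b (by simpa using hb))⟩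

lemma sort_image_add (s : Finset ℕ) (k : ℕ) :
    (s.image (· + k)).sort (· ≤ ·) = (s.sort (· ≤ ·)).map (· + k) := by
  refine (fun hp h1 h2 => List.Perm.eq_of_pairwise' (r := (· ≤ ·)) h1 h2 hp) ?_ ?_ ?_
  · apply List.perm_of_nodup_nodup_toFinset_eq (Finset.sort_nodup _ _)
    · exact (Finset.sort_nodup _ _).map (add_left_injective k)
    · ext x; simp
  · exact Finset.pairwise_sort _ _
  · rw [List.pairwise_map]
    exact (Finset.pairwise_sort _ _).imp (by intro a b hab; simpa using hab)

section decomp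
variable {i N' : ℕ} {R R' : Finset ℕ}

lemma image_sigma (i N' : ℕ) (R : Finset ℕ) :
    R.image (fun x => if x ≤ i then x else x + N') =
    (R.filter (· ≤ i)) ∪ (R.filter (fun x => ¬ x ≤ i)).image (· + N') := by
  rw [← Finset.filter_union_filter_not_eq (· ≤ i) R, Finset.image_union]
  congr 1
  · rw [Finset.filter_union_filter_not_eq]
    ext x
    simp only [Finset.mem_image, Finset.mem_filter]
    constructor
    · rintro ⟨y, ⟨hy, hyi⟩, rfl⟩; simpa [if_pos hyi] using ⟨hy, hyi⟩
    · rintro ⟨hx, hxi⟩; exact ⟨x, ⟨hx, hxi⟩, if_pos hxi⟩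
  · rw [Finset.filter_union_filter_not_eq]
    ext x
    simp only [Finset.mem_image, Finset.mem_filter]
    constructor
    · rintro ⟨y, ⟨hy, hyi⟩, rfl⟩; exact ⟨y, ⟨hy, hyi⟩, (if_neg hyi).symm⟩
    · rintro ⟨y, ⟨hy, hyi⟩, rfl⟩; exact ⟨y, ⟨hy, hyi⟩, if_neg hyi⟩

lemma sort_row (hR' : R' ⊆ Finset.Icc 1 N') :
    (R.image (fun x => if x ≤ i then x else x + N') ∪ R'.image (fun x => x + i)).sort (· ≤ ·)
    = (R.filter (· ≤ i)).sort (· ≤ ·) ++ ((R'.sort (· ≤ ·)).map (· + i)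
      ++ ((R.filter (fun x => ¬ x ≤ i)).sort (· ≤ ·)).map (· + N')) := by
  have key : R.image (fun x => if x ≤ i then x else x + N') ∪ R'.image (fun x => x + i)
      = (R.filter (· ≤ i)) ∪ (R'.image (· + i) ∪ (R.filter (fun x => ¬ x ≤ i)).image (· + N')) := by
    rw [image_sigma i N' R]
    have : R'.image (fun x => x + i) = R'.image (· + i) := rfl
    rw [this, Finset.union_assoc, Finset.union_comm (R'.image _)]
  rw [key, sort_union, sort_union, sort_image_add, sort_image_add]
  · intro a ha b hb
    rcases Finset.mem_image.1 ha with ⟨x, hx, rfl⟩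
    rcases Finset.mem_image.1 hb with ⟨y, hy, rfl⟩
    have hx2 := (Finset.mem_Icc.1 (hR' hx)).2
    have hy2 : i < y := by simpa using (Finset.mem_filter.1 hy).2
    omega
  · intro a ha b hb
    have ha2 : a ≤ i := (Finset.mem_filter.1 ha).2
    rcases Finset.mem_union.1 hb with hb | hb
    · rcases Finset.mem_image.1 hb with ⟨x, hx, rfl⟩
      have := (Finset.mem_Icc.1 (hR' hx)).1
      omega
    · rcases Finset.mem_image.1 hb with ⟨y, hy, rfl⟩
      have : i < y := by simpa using (Finset.mem_filter.1 hy).2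
      omega

lemma card_row (hR' : R' ⊆ Finset.Icc 1 N') :
    (R.image (fun x => if x ≤ i then x else x + N') ∪ R'.image (fun x => x + i)).card
      = R.card + R'.card := by
  have := congrArg List.length (sort_row (i := i) (N' := N') (R := R) hR')
  simp only [Finset.length_sort, List.length_append, List.length_map] at this
  rw [this]
  have h2 := Finset.card_filter_add_card_filter_not (s := R) (· ≤ i)
  omega

lemma sort_split (i : ℕ) (R : Finset ℕ) :
    R.sort (· ≤ ·) = (R.filter (· ≤ i)).sort (· ≤ ·)
      ++ (R.filter (fun x => ¬ x ≤ i)).sort (· ≤ ·) := by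
  conv_lhs => rw [← Finset.filter_union_filter_not_eq (· ≤ i) R]
  refine sort_union _ _ fun a ha b hb => ?_
  have h1 : a ≤ i := (Finset.mem_filter.1 ha).2
  have h2 : ¬ b ≤ i := (Finset.mem_filter.1 hb).2
  omega

lemma nth_eq_nthA {j : ℕ} (hj : j < (R.filter (· ≤ i)).card) :
    nthSmallest R j = nthSmallest (R.filter (· ≤ i)) j := by
  rw [nthSmallest, sort_split i R,
    List.getD_append _ _ _ _ (by rwa [Finset.length_sort]), nthSmallest]

lemma nth_eq_nthC {j : ℕ} (h1 : (R.filter (· ≤ i)).card ≤ j) :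
    nthSmallest R j = nthSmallest (R.filter (fun x => ¬ x ≤ i)) (j - (R.filter (· ≤ i)).card) := by
  rw [nthSmallest, sort_split i R,
    List.getD_append_right _ _ _ _ (by rwa [Finset.length_sort]), nthSmallest,
    Finset.length_sort]

lemma nth_le_i {j : ℕ} (hj : j < (R.filter (· ≤ i)).card) : nthSmallest R j ≤ i := by
  rw [nth_eq_nthA hj]
  exact (Finset.mem_filter.1 (nth_mem hj)).2

lemma nth_gt_i {j : ℕ} (h1 : (R.filter (· ≤ i)).card ≤ j) (h2 : j < R.card) :
    i < nthSmallest R j := by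
  rw [nth_eq_nthC h1]
  have hc : j - (R.filter (· ≤ i)).card < (R.filter (fun x => ¬ x ≤ i)).card := by
    have := Finset.card_filter_add_card_filter_not (s := R) (· ≤ i)
    omega
  have := (Finset.mem_filter.1 (nth_mem hc)).2
  omega

lemma nth_row_lo (hR' : R' ⊆ Finset.Icc 1 N') {j : ℕ} (hj : j < (R.filter (· ≤ i)).card) :
    nthSmallest (R.image (fun x => if x ≤ i then x else x + N') ∪ R'.image (fun x => x + i)) j
      = nthSmallest R j := by
  rw [nthSmallest, sort_row hR', List.getD_append _ _ _ _ (by rwa [Finset.length_sort]),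
    ← nthSmallest, ← nth_eq_nthA hj]

lemma nth_row_mid (hR' : R' ⊆ Finset.Icc 1 N') {j : ℕ}
    (h1 : (R.filter (· ≤ i)).card ≤ j) (h2 : j < (R.filter (· ≤ i)).card + R'.card) :
    nthSmallest (R.image (fun x => if x ≤ i then x else x + N') ∪ R'.image (fun x => x + i)) j
      = nthSmallest R' (j - (R.filter (· ≤ i)).card) + i := by
  rw [nthSmallest, sort_row hR', List.getD_append_right _ _ _ _ (by rwa [Finset.length_sort]),
    Finset.length_sort, List.getD_append _ _ _ _ (by simp only [List.length_map, Finset.length_sort]; omega),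
    List.getD_eq_getElem _ _ (by simp only [List.length_map, Finset.length_sort]; omega), List.getElem_map, nthSmallest,
    List.getD_eq_getElem _ _ (by rw [Finset.length_sort]; omega)]

lemma nth_row_hi (hR' : R' ⊆ Finset.Icc 1 N') {j : ℕ}
    (h1 : (R.filter (· ≤ i)).card + R'.card ≤ j) (h2 : j < R.card + R'.card) :
    nthSmallest (R.image (fun x => if x ≤ i then x else x + N') ∪ R'.image (fun x => x + i)) j
      = nthSmallest R (j - R'.card) + N' := by
  have hsum := Finset.card_filter_add_card_filter_not (s := R) (· ≤ i)
  have hc : j - (R.filter (· ≤ i)).card - R'.card < (R.filter (fun x => ¬ x ≤ i)).card := by omega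
  rw [nthSmallest, sort_row hR', List.getD_append_right _ _ _ _ (by rw [Finset.length_sort]; omega),
    Finset.length_sort, List.getD_append_right _ _ _ _ (by simp only [List.length_map, Finset.length_sort]; omega),
    List.length_map, Finset.length_sort,
    List.getD_eq_getElem _ _ (by simp only [List.length_map, Finset.length_sort]; omega), List.getElem_map,
    nth_eq_nthC (i := i) (by omega), nthSmallest,
    List.getD_eq_getElem _ _ (by rw [Finset.length_sort]; omega)]
  congr 2
  omega

end decomp

section cond
variable {i N' : ℕ} {R R₂ R' R₂' : Finset ℕ}

lemma cardA_le (h : TableauCond R R₂) :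
    (R₂.filter (· ≤ i)).card ≤ (R.filter (· ≤ i)).card := by
  by_contra hlt
  push_neg at hlt
  have ha2 : (R₂.filter (· ≤ i)).card ≤ R₂.card := Finset.card_filter_le _ _
  have hcc := h.1
  have hx : nthSmallest R₂ ((R.filter (· ≤ i)).card) ≤ i := nth_le_i hlt
  have hy : i < nthSmallest R ((R.filter (· ≤ i)).card) :=
    nth_gt_i (le_refl _) (by omega)
  have := h.2 ((R.filter (· ≤ i)).card) (by omega)
  omega

lemma shuffle_cond (hR' : R' ⊆ Finset.Icc 1 N') (hR₂' : R₂' ⊆ Finset.Icc 1 N')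
    (h : TableauCond R R₂) (h' : TableauCond R' R₂') :
    TableauCond (R.image (fun x => if x ≤ i then x else x + N') ∪ R'.image (fun x => x + i))
      (R₂.image (fun x => if x ≤ i then x else x + N') ∪ R₂'.image (fun x => x + i)) := by
  have haa : (R₂.filter (· ≤ i)).card ≤ (R.filter (· ≤ i)).card := cardA_le h
  have hbb : R₂'.card ≤ R'.card := h'.1
  have hcard : R₂.card ≤ R.card := h.1
  have haR : (R.filter (· ≤ i)).card ≤ R.card := Finset.card_filter_le _ _
  have haR₂ : (R₂.filter (· ≤ i)).card ≤ R₂.card := Finset.card_filter_le _ _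
  constructor
  · rw [card_row hR', card_row hR₂']
    omega
  · intro j hj
    rw [card_row hR₂'] at hj
    rcases lt_or_ge j (R₂.filter (· ≤ i)).card with hc1 | hc1
    · -- low part of upper row
      rw [nth_row_lo hR₂' hc1, nth_row_lo hR' (by omega)]
      exact h.2 j (by omega)
    rcases lt_or_ge j ((R₂.filter (· ≤ i)).card + R₂'.card) with hc2 | hc2
    · -- middle part of upper row
      rw [nth_row_mid hR₂' hc1 hc2]
      have hj2 : j - (R₂.filter (· ≤ i)).card < R₂'.card := by omega
      have h1up : 1 ≤ nthSmallest R₂' (j - (R₂.filter (· ≤ i)).card) :=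
        (Finset.mem_Icc.1 (hR₂' (nth_mem hj2))).1
      rcases lt_or_ge j (R.filter (· ≤ i)).card with hd | hd
      · rw [nth_row_lo hR' hd]
        have := nth_le_i hd
        omega
      · rw [nth_row_mid hR' hd (by omega)]
        have hmono : nthSmallest R' (j - (R.filter (· ≤ i)).card) ≤ nthSmallest R' (j - (R₂.filter (· ≤ i)).card) :=
          nth_mono (by omega) (by omega)
        have := h'.2 (j - (R₂.filter (· ≤ i)).card) hj2
        omega
    · -- high part of upper row
      rw [nth_row_hi hR₂' hc2 hj]
      have hjb : j - R₂'.card < R₂.card := by omega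
      have hup : i < nthSmallest R₂ (j - R₂'.card) := nth_gt_i (by omega) hjb
      rcases lt_or_ge j (R.filter (· ≤ i)).card with hd | hd
      · rw [nth_row_lo hR' hd]
        have := nth_le_i hd
        omega
      rcases lt_or_ge j ((R.filter (· ≤ i)).card + R'.card) with he | he
      · rw [nth_row_mid hR' hd he]
        have hjA : j - (R.filter (· ≤ i)).card < R'.card := by omega
        have := (Finset.mem_Icc.1 (hR' (nth_mem hjA))).2
        omega
      · rw [nth_row_hi hR' he (by omega)]
        have hmono : nthSmallest R (j - R'.card) ≤ nthSmallest R (j - R₂'.card) :=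
          nth_mono (by omega) (by omega)
        have := h.2 (j - R₂'.card) hjb
        omega

end cond

section assemble
variable {N : ℕ} {L : List (Finset ℕ)}

lemma getD_subset (hfold : L.foldr (· ∪ ·) ∅ = Finset.Icc 1 N) (s : ℕ) :
    L.getD s ∅ ⊆ Finset.Icc 1 N := by
  rcases lt_or_ge s L.length with h | h
  · rw [List.getD_eq_getElem _ _ h, ← hfold]
    intro x hx
    exact mem_foldr.2 ⟨_, List.getElem_mem h, hx⟩
  · rw [List.getD_eq_default _ _ h]
    exact Finset.empty_subset _

lemma getD_cond (hc : L.Chain' TableauCond) (s : ℕ) :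
    TableauCond (L.getD s ∅) (L.getD (s + 1) ∅) := by
  rcases lt_or_ge (s + 1) L.length with h | h
  · rw [List.getD_eq_getElem _ _ (by omega), List.getD_eq_getElem _ _ h]
    exact List.isChain_iff_getElem.1 hc s (by omega)
  · rw [List.getD_eq_default _ _ h]
    exact ⟨by simp, by simp⟩

lemma getD_disj (hd : L.Pairwise Disjoint) {s t : ℕ} (hst : s < t) :
    Disjoint (L.getD s ∅) (L.getD t ∅) := by
  rcases lt_or_ge t L.length with h | h
  · rw [List.getD_eq_getElem _ _ (by omega), List.getD_eq_getElem _ _ h]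
    exact List.pairwise_iff_get.1 hd ⟨s, by omega⟩ ⟨t, h⟩ hst
  · rw [List.getD_eq_default _ _ h]
    exact Finset.disjoint_empty_right _

lemma mem_rows (hfold : L.foldr (· ∪ ·) ∅ = Finset.Icc 1 N) {x : ℕ} :
    x ∈ Finset.Icc 1 N ↔ ∃ s, x ∈ L.getD s ∅ := by
  rw [← hfold, mem_foldr]
  constructor
  · rintro ⟨t, ht, hx⟩
    rcases List.mem_iff_get.1 ht with ⟨⟨s, hs⟩, rfl⟩
    exact ⟨s, by rw [List.getD_eq_getElem _ _ hs]; exact hx⟩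
  · rintro ⟨s, hx⟩
    rcases lt_or_ge s L.length with h | h
    · rw [List.getD_eq_getElem _ _ h] at hx
      exact ⟨_, List.getElem_mem h, hx⟩
    · rw [List.getD_eq_default _ _ h] at hx
      simp at hx

lemma mem_rows_length (hfold : L.foldr (· ∪ ·) ∅ = Finset.Icc 1 N) {x s : ℕ}
    (hx : x ∈ L.getD s ∅) : s < L.length := by
  by_contra h
  rw [List.getD_eq_default _ _ (by omega)] at hx
  simp at hx

end assemble


/-- The shuffle of a standard Young tableau `T'` with `N'` boxes into a standard Young
tableau `T` with `N` boxes at any position `i ≤ N` is a standard Young tableau with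
`N + N'` boxes. -/
theorem shuffle_is_SYT (N N' : ℕ) (L L' : List (Finset ℕ))
    (hT : IsSYT N L) (hT' : IsSYT N' L') (i : ℕ) (hi : i ≤ N) :
    IsSYT (N + N') (shuffleRows L L' i N') := by
  
  obtain ⟨hne, hdis, hfold, -, hchain⟩ := hT
  obtain ⟨hne', hdis', hfold', -, hchain'⟩ := hT'
  set f : ℕ → Finset ℕ := fun s =>
    ((L.getD s ∅).image fun x => if x ≤ i then x else x + N') ∪
    ((L'.getD s ∅).image fun x => x + i) with hf
  have hrowsub : ∀ s, L.getD s ∅ ⊆ Finset.Icc 1 N := getD_subset hfold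
  have hrowsub' : ∀ s, L'.getD s ∅ ⊆ Finset.Icc 1 N' := getD_subset hfold'
  have hcond : ∀ s, TableauCond (f s) (f (s + 1)) := fun s =>
    shuffle_cond (hrowsub' s) (hrowsub' (s + 1)) (getD_cond hchain s) (getD_cond hchain' s)
  have hcardrow : ∀ s, (f s).card = (L.getD s ∅).card + (L'.getD s ∅).card := fun s =>
    card_row (hrowsub' s)
  have hshuf : shuffleRows L L' i N' = (List.range (max L.length L'.length)).map f := rfl
  refine ⟨?_, ?_, ?_, ?_, ?_⟩
  · -- nonempty
    intro t ht
    rw [hshuf, List.mem_map] at ht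
    obtain ⟨s, hs, rfl⟩ := ht
    rw [List.mem_range] at hs
    rcases lt_or_ge s L.length with h | h
    · obtain ⟨x, hx⟩ := hne _ (List.getElem_mem h)
      exact ⟨if x ≤ i then x else x + N', Finset.mem_union_left _
        (Finset.mem_image_of_mem _ (by rw [List.getD_eq_getElem _ _ h]; exact hx))⟩
    · have h' : s < L'.length := by omega
      obtain ⟨x, hx⟩ := hne' _ (List.getElem_mem h')
      exact ⟨x + i, Finset.mem_union_right _
        (Finset.mem_image_of_mem _ (by rw [List.getD_eq_getElem _ _ h']; exact hx))⟩
  · -- pairwise disjoint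
    rw [hshuf, List.pairwise_map]
    refine (List.pairwise_lt_range (n := max L.length L'.length)).imp ?_
    intro s t hst
    rw [Finset.disjoint_left]
    intro x hxs hxt
    rcases Finset.mem_union.1 hxs with hs | hs <;> rcases Finset.mem_union.1 hxt with ht | ht
    · obtain ⟨y, hy, hyx⟩ := Finset.mem_image.1 hs
      obtain ⟨z, hz, hzx⟩ := Finset.mem_image.1 ht
      have hy1 := Finset.mem_Icc.1 (hrowsub s hy)
      have hz1 := Finset.mem_Icc.1 (hrowsub t hz)
      have hyz : y = z := by split_ifs at hyx hzx <;> omega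
      refine Finset.disjoint_left.1 (getD_disj hdis hst) hy ?_
      rw [hyz]; exact hz
    · obtain ⟨y, hy, hyx⟩ := Finset.mem_image.1 hs
      obtain ⟨z, hz, hzx⟩ := Finset.mem_image.1 ht
      have hy1 := Finset.mem_Icc.1 (hrowsub s hy)
      have hz1 := Finset.mem_Icc.1 (hrowsub' t hz)
      split_ifs at hyx <;> omega
    · obtain ⟨y, hy, hyx⟩ := Finset.mem_image.1 hs
      obtain ⟨z, hz, hzx⟩ := Finset.mem_image.1 ht
      have hy1 := Finset.mem_Icc.1 (hrowsub' s hy)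
      have hz1 := Finset.mem_Icc.1 (hrowsub t hz)
      split_ifs at hzx <;> omega
    · obtain ⟨y, hy, hyx⟩ := Finset.mem_image.1 hs
      obtain ⟨z, hz, hzx⟩ := Finset.mem_image.1 ht
      have hyz : y = z := by omega
      refine Finset.disjoint_left.1 (getD_disj hdis' hst) hy ?_
      rw [hyz]; exact hz
  · -- union = Icc
    ext x
    rw [hshuf, mem_foldr]
    simp only [List.mem_map, List.mem_range]
    constructor
    · rintro ⟨t, ⟨s, hs, rfl⟩, hx⟩
      rcases Finset.mem_union.1 hx with h | h
      · obtain ⟨y, hy, rfl⟩ := Finset.mem_image.1 h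
        have := Finset.mem_Icc.1 (hrowsub s hy)
        rw [Finset.mem_Icc]
        split_ifs <;> omega
      · obtain ⟨y, hy, rfl⟩ := Finset.mem_image.1 h
        have := Finset.mem_Icc.1 (hrowsub' s hy)
        rw [Finset.mem_Icc]
        omega
    · intro hx
      rw [Finset.mem_Icc] at hx
      rcases le_or_gt x i with h1 | h1
      · obtain ⟨s, hs⟩ := (mem_rows hfold).1 (Finset.mem_Icc.2 ⟨hx.1, by omega⟩)
        refine ⟨f s, ⟨s, by have := mem_rows_length hfold hs; omega, rfl⟩,
          Finset.mem_union_left _ (Finset.mem_image.2 ⟨x, hs, if_pos h1⟩)⟩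
      rcases le_or_gt x (i + N') with h2 | h2
      · obtain ⟨s, hs⟩ := (mem_rows hfold').1 (Finset.mem_Icc.2 (⟨by omega, by omega⟩ :
          1 ≤ x - i ∧ x - i ≤ N'))
        refine ⟨f s, ⟨s, by have := mem_rows_length hfold' hs; omega, rfl⟩,
          Finset.mem_union_right _ (Finset.mem_image.2 ⟨x - i, hs, by omega⟩)⟩
      · obtain ⟨s, hs⟩ := (mem_rows hfold).1 (Finset.mem_Icc.2 (⟨by omega, by omega⟩ :
          1 ≤ x - N' ∧ x - N' ≤ N))
        refine ⟨f s, ⟨s, by have := mem_rows_length hfold hs; omega, rfl⟩,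
          Finset.mem_union_left _ (Finset.mem_image.2 ⟨x - N', hs, ?_⟩)⟩
        rw [if_neg (by omega)]
        omega
  · -- card chain
    rw [hshuf, List.map_map, List.Chain', List.isChain_map]
    cases h : max L.length L'.length with
    | zero => simp
    | succ m =>
      rw [List.isChain_range_succ]
      intro s _
      exact (hcond s).1
  · -- tableau chain
    rw [hshuf, List.Chain', List.isChain_map]
    cases h : max L.length L'.length with
    | zero => simp
    | succ m =>
      rw [List.isChain_range_succ]
      intro s _
      exact hcond s
end
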